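/- If x_a ≥ x_θ ≥ 0 and x_b ≥ 0, then P(x_a, x_b, x_θ) ≥ (1 − Φ(x_a − x_θ))/2 + (1 − Φ(x_a + x_θ))/2. If instead 0 ≤ x_a < x_θ and x_b ≥ 0, then P(x_a, x_b, x_θ) ≥ 1/4. -/
import Mathlib


open MeasureTheory Real Filter

/-- Standard one-dimensional Gaussian pdf. -/
noncomputable def phi1 (x : ℝ) : ℝ := (Real.sqrt (2 * π))⁻¹ * Real.exp (-x ^ 2 / 2)

/-- `w(y, b) = e^{yb}/(e^{yb} + e^{−yb})`. -/
noncomputable def wgt (y b : ℝ) : ℝ :=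
  Real.exp (y * b) / (Real.exp (y * b) + Real.exp (-(y * b)))

/-- `P(x_a, x_b, x_θ) = ∫ w(y − x_a, x_b)·(φ(y − x_θ) + φ(y + x_θ))/2 dy`. -/
noncomputable def Pfun (xa xb xθ : ℝ) : ℝ :=
  ∫ y, wgt (y - xa) xb * ((phi1 (y - xθ) + phi1 (y + xθ)) / 2)

/-- `Γ(x_a, x_b, x_θ) = ∫ w(y − x_a, x_b)·y·(φ(y − x_θ) + φ(y + x_θ))/2 dy`. -/
noncomputable def Gfun (xa xb xθ : ℝ) : ℝ :=
  ∫ y, wgt (y - xa) xb * y * ((phi1 (y - xθ) + phi1 (y + xθ)) / 2)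

/-- `F(x_b, x_θ) = ∫ (2 w(y + x_θ, x_b) − 1)·(y + x_θ)·φ(y) dy`. -/
noncomputable def Ffun (xb xθ : ℝ) : ℝ :=
  ∫ y, (2 * wgt (y + xθ) xb - 1) * (y + xθ) * phi1 y

/-- Standard Gaussian cdf. -/
noncomputable def PhiCdf (x : ℝ) : ℝ := ∫ y in Set.Iic x, phi1 y

/- ### Auxiliary lemmas -/

lemma wgt_nonneg (y b : ℝ) : 0 ≤ wgt y b :=
  div_nonneg (Real.exp_nonneg _) (by positivity)

lemma wgt_le_one (y b : ℝ) : wgt y b ≤ 1 := by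
  rw [wgt, div_le_one (by positivity)]
  nlinarith [Real.exp_nonneg (-(y*b))]

lemma wgt_add_neg (y b : ℝ) : wgt y b + wgt (-y) b = 1 := by
  rw [wgt, wgt, neg_mul, neg_neg]
  rw [div_add_div _ _ (by positivity) (by positivity)]
  rw [div_eq_one_iff_eq (by positivity)]
  ring

lemma half_le_wgt {y b : ℝ} (h : 0 ≤ y * b) : 1/2 ≤ wgt y b := by
  rw [wgt, le_div_iff₀ (by positivity)]
  nlinarith [Real.exp_le_exp.mpr (by linarith : -(y*b) ≤ y*b)]

lemma wgt_le_half {y b : ℝ} (h : y * b ≤ 0) : wgt y b ≤ 1/2 := by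
  rw [wgt, div_le_iff₀ (by positivity)]
  nlinarith [Real.exp_le_exp.mpr (by linarith : y*b ≤ -(y*b))]

lemma phi1_nonneg (x : ℝ) : 0 ≤ phi1 x := by unfold phi1; positivity

lemma phi1_le {u v : ℝ} (h : u^2 ≤ v^2) : phi1 v ≤ phi1 u := by
  unfold phi1
  have : Real.exp (-v^2/2) ≤ Real.exp (-u^2/2) := Real.exp_le_exp.mpr (by linarith)
  have h0 : (0:ℝ) ≤ (Real.sqrt (2*π))⁻¹ := by positivity
  nlinarith

lemma continuous_phi1 : Continuous phi1 := by
  unfold phi1; fun_prop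

lemma continuous_wgt (b : ℝ) : Continuous (fun y => wgt y b) := by
  unfold wgt
  exact Continuous.div (by fun_prop) (by fun_prop) (fun x => by positivity)

lemma phi1_eq : phi1 = ProbabilityTheory.gaussianPDFReal 0 1 := by
  ext x
  simp [phi1, ProbabilityTheory.gaussianPDFReal]

lemma integrable_phi1 : Integrable phi1 := by
  rw [phi1_eq]; exact ProbabilityTheory.integrable_gaussianPDFReal 0 1

lemma integral_phi1 : ∫ x, phi1 x = 1 := by
  rw [phi1_eq]; exact ProbabilityTheory.integral_gaussianPDFReal_eq_one 0 one_ne_zero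

lemma dom_aux {w p : ℝ → ℝ} (hw : Continuous w) (hp : Continuous p)
    (hw0 : ∀ y, 0 ≤ w y) (hw1 : ∀ y, w y ≤ 1) (hp0 : ∀ y, 0 ≤ p y)
    (hint : Integrable p) : Integrable (fun y => w y * p y) := by
  refine hint.mono' (hw.mul hp).aestronglyMeasurable ?_
  filter_upwards with y
  rw [Real.norm_eq_abs, abs_of_nonneg (mul_nonneg (hw0 y) (hp0 y))]
  nlinarith [hw0 y, hw1 y, hp0 y]

lemma intA (b c : ℝ) : Integrable (fun y => wgt y b * phi1 (y + c)) :=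
  dom_aux (continuous_wgt b) (continuous_phi1.comp (by fun_prop)) (fun y => wgt_nonneg _ _)
    (fun y => wgt_le_one _ _) (fun y => phi1_nonneg _)
    (integrable_phi1.comp_add_right c)

lemma integrable_phi1_csub (c : ℝ) : Integrable (fun y => phi1 (c - y)) := by
  have h := (integrable_phi1.comp_add_right c).comp_neg
  have he : (fun y => phi1 (c - y)) = fun y => phi1 (-y + c) := by
    funext y; rw [sub_eq_neg_add]
  rw [he]; exact h

lemma intB (b c : ℝ) : Integrable (fun y => wgt (-y) b * phi1 (c - y)) :=
  dom_aux ((continuous_wgt b).comp continuous_neg) (continuous_phi1.comp (by fun_prop))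
    (fun y => wgt_nonneg _ _) (fun y => wgt_le_one _ _) (fun y => phi1_nonneg _)
    (integrable_phi1_csub c)

lemma intGsub (a b c : ℝ) : Integrable (fun y => wgt (y - a) b * phi1 (y - c)) :=
  dom_aux ((continuous_wgt b).comp (by fun_prop)) (continuous_phi1.comp (by fun_prop))
    (fun y => wgt_nonneg _ _) (fun y => wgt_le_one _ _) (fun y => phi1_nonneg _)
    (integrable_phi1.comp_sub_right c)

lemma intGadd (a b c : ℝ) : Integrable (fun y => wgt (y - a) b * phi1 (y + c)) :=
  dom_aux ((continuous_wgt b).comp (by fun_prop)) (continuous_phi1.comp (by fun_prop))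
    (fun y => wgt_nonneg _ _) (fun y => wgt_le_one _ _) (fun y => phi1_nonneg _)
    (integrable_phi1.comp_add_right c)

/-- `I(b, c) = ∫ w(y, b) φ(y + c) dy`. -/
noncomputable def Ifun (b c : ℝ) : ℝ := ∫ y, wgt y b * phi1 (y + c)

lemma Ifun_nonneg (b c : ℝ) : 0 ≤ Ifun b c :=
  integral_nonneg fun y => mul_nonneg (wgt_nonneg _ _) (phi1_nonneg _)

lemma twoI (b c : ℝ) :
    (∫ y, (wgt y b * phi1 (y + c) + wgt (-y) b * phi1 (c - y))) = 2 * Ifun b c := by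
  rw [integral_add (intA b c) (intB b c)]
  have h : (∫ y, wgt (-y) b * phi1 (c - y)) = Ifun b c := by
    have he : (fun y => wgt (-y) b * phi1 (c - y))
        = fun y => (fun t => wgt t b * phi1 (t + c)) (-y) := by
      funext y; simp only; rw [sub_eq_neg_add]
    rw [he]
    exact integral_neg_eq_self (fun t => wgt t b * phi1 (t + c)) volume
  rw [h]; unfold Ifun; ring

lemma integral_phi1_add (c : ℝ) : (∫ y, phi1 (y + c)) = 1 := by
  rw [integral_add_right_eq_self phi1 c, integral_phi1]

lemma integral_phi1_csub (c : ℝ) : (∫ y, phi1 (c - y)) = 1 := by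
  have he : (fun y => phi1 (c - y)) = fun y => (fun t => phi1 (t + c)) (-y) := by
    funext y; simp only; rw [sub_eq_neg_add]
  rw [he]
  rw [show (∫ y, (fun t => phi1 (t + c)) (-y)) = ∫ y, phi1 (y + c) from
    integral_neg_eq_self (fun t => phi1 (t + c)) volume]
  exact integral_phi1_add c

/-- Lower bound `1/2` when `c ≤ 0`. -/
lemma Ifun_ge_half {b c : ℝ} (hb : 0 ≤ b) (hc : c ≤ 0) : 1/2 ≤ Ifun b c := by
  have hmono : (∫ y, (phi1 (y + c) + phi1 (c - y)) / 2)
      ≤ ∫ y, (wgt y b * phi1 (y + c) + wgt (-y) b * phi1 (c - y)) := by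
    refine integral_mono (((integrable_phi1.comp_add_right c).add
      (integrable_phi1_csub c)).div_const 2) ((intA b c).add (intB b c)) ?_
    intro y
    simp only
    have hw := wgt_add_neg y b
    rcases le_total 0 y with hy | hy
    · have h1 := half_le_wgt (mul_nonneg hy hb)
      have h2 : phi1 (c - y) ≤ phi1 (y + c) := phi1_le (by nlinarith)
      nlinarith [wgt_le_one y b, phi1_nonneg (y + c), phi1_nonneg (c - y)]
    · have h1 := wgt_le_half (mul_nonpos_of_nonpos_of_nonneg hy hb)
      have h2 : phi1 (y + c) ≤ phi1 (c - y) := phi1_le (by nlinarith)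
      nlinarith [wgt_nonneg y b, phi1_nonneg (y + c), phi1_nonneg (c - y)]
  have hL : (∫ y, (phi1 (y + c) + phi1 (c - y)) / 2) = 1 := by
    rw [integral_div, integral_add (integrable_phi1.comp_add_right c) (integrable_phi1_csub c),
      integral_phi1_add, integral_phi1_csub]
    norm_num
  rw [hL, twoI] at hmono
  linarith

lemma integral_Ioi_phi1 (c : ℝ) : (∫ y in Set.Ioi c, phi1 y) = 1 - PhiCdf c := by
  have h := integral_add_compl (measurableSet_Iic (a := c)) integrable_phi1
  rw [Set.compl_Iic] at h
  rw [integral_phi1] at h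
  unfold PhiCdf
  linarith

lemma integral_ind1 (c : ℝ) :
    (∫ y, (Set.Ioi (0:ℝ)).indicator (fun t => phi1 (t + c)) y) = 1 - PhiCdf c := by
  have he : (Set.Ioi (0:ℝ)).indicator (fun t => phi1 (t + c))
      = fun y => (Set.Ioi c).indicator phi1 (y + c) := by
    funext y
    by_cases h : 0 < y
    · rw [Set.indicator_of_mem (Set.mem_Ioi.mpr h),
        Set.indicator_of_mem (Set.mem_Ioi.mpr (by linarith))]
    · rw [Set.indicator_of_notMem (by simpa using h),
        Set.indicator_of_notMem (by simp only [Set.mem_Ioi]; intro hh; exact h (by linarith))]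
  rw [he, integral_add_right_eq_self ((Set.Ioi c).indicator phi1) c,
    integral_indicator measurableSet_Ioi, integral_Ioi_phi1]

lemma integral_ind2 (c : ℝ) :
    (∫ y, (Set.Iio (0:ℝ)).indicator (fun t => phi1 (c - t)) y) = 1 - PhiCdf c := by
  have he : (Set.Iio (0:ℝ)).indicator (fun t => phi1 (c - t))
      = fun y => (Set.Ioi (0:ℝ)).indicator (fun t => phi1 (t + c)) (-y) := by
    funext y
    by_cases h : y < 0
    · rw [Set.indicator_of_mem (Set.mem_Iio.mpr h),
        Set.indicator_of_mem (Set.mem_Ioi.mpr (by linarith))]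
      rw [sub_eq_neg_add]
    · rw [Set.indicator_of_notMem (by simpa using h),
        Set.indicator_of_notMem (by simp only [Set.mem_Ioi]; intro hh; exact h (by linarith))]
  rw [he, integral_neg_eq_self, integral_ind1]

/-- Lower bound `1 - Φ(c)` when `0 ≤ c`. -/
lemma Ifun_ge_tail {b c : ℝ} (hb : 0 ≤ b) (hc : 0 ≤ c) : 1 - PhiCdf c ≤ Ifun b c := by
  set T : ℝ → ℝ := fun y => (Set.Ioi (0:ℝ)).indicator (fun t => phi1 (t + c)) y
      + (Set.Iio (0:ℝ)).indicator (fun t => phi1 (c - t)) y with hT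
  have hTint : Integrable T :=
    ((integrable_phi1.comp_add_right c).indicator measurableSet_Ioi).add
      ((integrable_phi1_csub c).indicator measurableSet_Iio)
  have hmono : (∫ y, T y)
      ≤ ∫ y, (wgt y b * phi1 (y + c) + wgt (-y) b * phi1 (c - y)) := by
    refine integral_mono hTint ((intA b c).add (intB b c)) ?_
    intro y
    show T y ≤ wgt y b * phi1 (y + c) + wgt (-y) b * phi1 (c - y)
    have hw := wgt_add_neg y b
    rcases lt_trichotomy y 0 with hy | hy | hy
    · have h1 : T y = phi1 (c - y) := by
        rw [hT]; simp only
        rw [Set.indicator_of_notMem (by simp only [Set.mem_Ioi]; linarith),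
          Set.indicator_of_mem (Set.mem_Iio.mpr hy)]
        ring
      rw [h1]
      have h2 : phi1 (c - y) ≤ phi1 (y + c) := phi1_le (by nlinarith)
      nlinarith [wgt_nonneg y b, wgt_le_one y b, phi1_nonneg (c - y)]
    · have h1 : T y = 0 := by
        rw [hT]; subst hy; simp
      rw [h1]
      exact add_nonneg (mul_nonneg (wgt_nonneg _ _) (phi1_nonneg _))
        (mul_nonneg (wgt_nonneg _ _) (phi1_nonneg _))
    · have h1 : T y = phi1 (y + c) := by
        rw [hT]; simp only
        rw [Set.indicator_of_mem (Set.mem_Ioi.mpr hy),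
          Set.indicator_of_notMem (by simp only [Set.mem_Iio]; linarith)]
        ring
      rw [h1]
      have h2 : phi1 (y + c) ≤ phi1 (c - y) := phi1_le (by nlinarith)
      nlinarith [wgt_nonneg y b, wgt_le_one y b, phi1_nonneg (y + c)]
  have hTval : (∫ y, T y) = 2 * (1 - PhiCdf c) := by
    rw [hT]
    rw [integral_add ((integrable_phi1.comp_add_right c).indicator measurableSet_Ioi)
      ((integrable_phi1_csub c).indicator measurableSet_Iio)]
    rw [integral_ind1, integral_ind2]
    ring
  rw [hTval, twoI] at hmono
  linarith

/-- Decomposition of `Pfun` into shifted `Ifun`s. -/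
lemma Pfun_eq (xa xb xθ : ℝ) :
    Pfun xa xb xθ = (Ifun xb (xa - xθ) + Ifun xb (xa + xθ)) / 2 := by
  unfold Pfun
  have he : (fun y => wgt (y - xa) xb * ((phi1 (y - xθ) + phi1 (y + xθ)) / 2))
      = fun y => (wgt (y - xa) xb * phi1 (y - xθ) + wgt (y - xa) xb * phi1 (y + xθ)) / 2 := by
    funext y; ring
  rw [he, integral_div, integral_add (intGsub xa xb xθ) (intGadd xa xb xθ)]
  have h1 : (∫ y, wgt (y - xa) xb * phi1 (y - xθ)) = Ifun xb (xa - xθ) := by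
    have h := integral_add_right_eq_self (μ := volume) (fun y => wgt (y - xa) xb * phi1 (y - xθ)) xa
    rw [← h]
    unfold Ifun
    congr 1
    funext y
    rw [add_sub_cancel_right]
    congr 1
    ring
  have h2 : (∫ y, wgt (y - xa) xb * phi1 (y + xθ)) = Ifun xb (xa + xθ) := by
    have h := integral_add_right_eq_self (μ := volume) (fun y => wgt (y - xa) xb * phi1 (y + xθ)) xa
    rw [← h]
    unfold Ifun
    congr 1
    funext y
    rw [add_sub_cancel_right]
    congr 1
    ring
  rw [h1, h2]

/-- Lower bounds on `P`. -/
theorem stmt16 (xa xb xθ : ℝ) (hb : 0 ≤ xb) :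
    (0 ≤ xθ → xθ ≤ xa →
      (1 - PhiCdf (xa - xθ)) / 2 + (1 - PhiCdf (xa + xθ)) / 2 ≤ Pfun xa xb xθ) ∧
    (0 ≤ xa → xa < xθ → (1 : ℝ) / 4 ≤ Pfun xa xb xθ) := by
  constructor
  · intro hθ hle
    rw [Pfun_eq]
    have h1 := Ifun_ge_tail (b := xb) (c := xa - xθ) hb (by linarith)
    have h2 := Ifun_ge_tail (b := xb) (c := xa + xθ) hb (by linarith)
    linarith
  · intro ha hlt
    rw [Pfun_eq]
    have h1 := Ifun_ge_half (b := xb) (c := xa - xθ) hb (by linarith)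
    have h2 := Ifun_nonneg xb (xa + xθ)
    linarith
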